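/- arXiv:1206.0219 — 9 statements merged into one kernel-verified Lean document; each statement's English description precedes it below -/
import Mathlib

section
/- Let δ be a Young diagram of height < r and let δ_0 = δ, δ_1, δ_2, … be the sequence produced by the staircase algorithm: δ_1 is obtained from δ_0 by adding boxes to the first column until it has height r, and for k ≥ 2, δ_k is obtained from δ_{k−1} by adding boxes to the k-th column until its height is one more than the height of the (k−1)-th column of δ_0. Then, writing h_k for the height of the k-th column of δ and δ = (δ^1, …, δ^{r−1}), one has δ_k = (δ^1, …, δ^{h_k}, k, δ^{h_k+1}+1, …, δ^{r−1}+1) for all k ≥ 1. -/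
/-- `colHt f j` : height of the `j`-th column (`j ≥ 1`) of the Young diagram with
0-indexed row lengths `f`, i.e. the number of rows of length at least `j`. -/
noncomputable def colHt (f : ℕ → ℕ) (j : ℕ) : ℕ := sInf {i | f i < j}

/-- Add boxes to column `k` so that rows `0,…,t-1` reach length at least `k`,
i.e. the `k`-th column reaches height `t`. -/
def addCol (f : ℕ → ℕ) (k t : ℕ) : ℕ → ℕ :=
  fun i => if i < t then max (f i) k else f i

/-- The staircase algorithm with parameter `r` applied to a Young diagram `f` of
height `< r`: stage 1 adds boxes to the first column until it reaches height `r`;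
stage `k ≥ 2` adds boxes to the `k`-th column until its height is one more than the
height of the `(k-1)`-th column of the starting diagram. `staircase r f k` is `δ_k`. -/
noncomputable def staircase (r : ℕ) (f : ℕ → ℕ) : ℕ → ℕ → ℕ
  | 0 => f
  | k + 1 => addCol (staircase r f k) (k + 1) (if k = 0 then r else colHt f k + 1)

lemma f_colHt_lt (r : ℕ) (f : ℕ → ℕ) (hr : 1 ≤ r) (hht : ∀ i, r - 1 ≤ i → f i = 0)
    (j : ℕ) (hj : 1 ≤ j) : f (colHt f j) < j := by
  have hne : {i | f i < j}.Nonempty :=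
    ⟨r - 1, by show f (r - 1) < j; rw [hht (r - 1) le_rfl]; omega⟩
  exact Nat.sInf_mem hne

lemma colHt_lt (r : ℕ) (f : ℕ → ℕ) (hr : 1 ≤ r) (hht : ∀ i, r - 1 ≤ i → f i = 0)
    (j : ℕ) (hj : 1 ≤ j) : colHt f j < r := by
  have h : colHt f j ≤ r - 1 :=
    Nat.sInf_le (show (r - 1) ∈ {i | f i < j} from by
      show f (r - 1) < j; rw [hht (r - 1) le_rfl]; omega)
  omega

lemma le_of_lt_colHt (f : ℕ → ℕ) {i j : ℕ} (h : i < colHt f j) : j ≤ f i := by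
  by_contra hc
  have hm : i ∈ {n | f n < j} := by simp only [Set.mem_setOf_eq]; omega
  exact absurd (Nat.sInf_le hm) (Nat.not_le.2 h)

/-- Explicit description of the diagrams produced by the staircase algorithm:
writing `h_k = colHt f k`, the diagram `δ_k` is
`(δ^1, …, δ^{h_k}, k, δ^{h_k+1}+1, …, δ^{r-1}+1)` (here 0-indexed rows). -/
theorem stmt2 (r : ℕ) (f : ℕ → ℕ) (hr : 1 ≤ r)
    (hmono : ∀ i j, i ≤ j → f j ≤ f i)
    (hht : ∀ i, r - 1 ≤ i → f i = 0) :
    ∀ k, 1 ≤ k → ∀ i,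
      staircase r f k i =
        if i < colHt f k then f i
        else if i = colHt f k then k
        else if i < r then f (i - 1) + 1
        else 0 := by
  intro k hk
  induction k, hk using Nat.le_induction with
  | base =>
    intro i
    have h1r : colHt f 1 < r := colHt_lt r f hr hht 1 le_rfl
    have hf1 : f (colHt f 1) < 1 := f_colHt_lt r f hr hht 1 le_rfl
    show addCol f 1 r i = _
    unfold addCol
    rcases lt_trichotomy i (colHt f 1) with h | h | h
    · have := le_of_lt_colHt f h
      simp only [if_pos (h.trans h1r), if_pos h]
      omega
    · rw [h, if_pos h1r, if_neg (lt_irrefl _), if_pos rfl]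
      omega
    · have hfi : f i = 0 := by
        have := hmono _ _ h.le
        omega
      by_cases hir : i < r
      · have hfi1 : f (i - 1) = 0 := by
          have := hmono _ _ (show colHt f 1 ≤ i - 1 by omega)
          omega
        simp only [if_pos hir, if_neg (by omega : ¬ i < colHt f 1),
          if_neg (by omega : ¬ i = colHt f 1)]
        omega
      · simp only [if_neg hir, if_neg (by omega : ¬ i < colHt f 1),
          if_neg (by omega : ¬ i = colHt f 1)]
        exact hht i (by omega)
  | succ k hk ih =>
    intro i
    have hK : colHt f (k+1) ≤ colHt f k :=
      Nat.sInf_le (by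
        have := f_colHt_lt r f hr hht k hk
        simp only [Set.mem_setOf_eq]; omega)
    have hkr : colHt f k < r := colHt_lt r f hr hht k hk
    have hfk : f (colHt f k) < k := f_colHt_lt r f hr hht k hk
    have hfk1 : f (colHt f (k+1)) < k + 1 := f_colHt_lt r f hr hht (k+1) (by omega)
    show addCol (staircase r f k) (k+1) (if k = 0 then r else colHt f k + 1) i = _
    rw [if_neg (by omega : ¬ k = 0)]
    unfold addCol
    rw [ih i]
    rcases lt_trichotomy i (colHt f (k+1)) with h | h | h
    · -- i < h_{k+1} ≤ h_k
      have h1 : k + 1 ≤ f i := le_of_lt_colHt f h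
      simp only [if_pos (by omega : i < colHt f k + 1), if_pos (by omega : i < colHt f k),
        if_pos h]
      omega
    · -- i = h_{k+1}
      have hfle : f i < k + 1 := by rw [h]; exact hfk1
      rcases eq_or_lt_of_le hK with he | hl
      · simp only [if_pos (by omega : i < colHt f k + 1),
          if_neg (by omega : ¬ i < colHt f k), if_pos (by omega : i = colHt f k),
          if_neg (by omega : ¬ i < colHt f (k+1)), if_pos h]
        omega
      · simp only [if_pos (by omega : i < colHt f k + 1),
          if_pos (by omega : i < colHt f k),
          if_neg (by omega : ¬ i < colHt f (k+1)), if_pos h]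
        omega
    · -- i > h_{k+1}
      have hfi : f i < k + 1 := by
        have := hmono _ _ h.le
        omega
      simp only [if_neg (by omega : ¬ i < colHt f (k+1)),
        if_neg (by omega : ¬ i = colHt f (k+1))]
      by_cases hik : i < colHt f k + 1
      · -- h_{k+1} < i ≤ h_k, so i < r
        have hir : i < r := by omega
        have hfi1ge : k ≤ f (i - 1) := le_of_lt_colHt f (by omega)
        have hfi1lt : f (i - 1) < k + 1 := by
          have := hmono _ _ (show colHt f (k+1) ≤ i - 1 by omega)
          omega
        rw [if_pos hik, if_pos hir]
        rcases lt_trichotomy i (colHt f k) with h2 | h2 | h2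
        · rw [if_pos h2]; omega
        · rw [if_neg (by omega), if_pos h2]; omega
        · omega
      · -- i > h_k: unchanged
        rw [if_neg hik, if_neg (by omega : ¬ i < colHt f k),
          if_neg (by omega : ¬ i = colHt f k)]
end

section
/- Let δ be a Young diagram of height < r, and let δ_0 = δ, δ_1, δ_2, … and s_k be produced by the staircase algorithm, where s_k is the total number of boxes added after k stages, i.e. s_k = |δ_k| − |δ_0|. Then each δ_k is a valid Young diagram (non-increasing row lengths), and the height of δ_k equals r for every k ≥ 1. -/
/-- Each diagram `δ_k` produced by the staircase algorithm is a valid Young diagram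
(non-increasing row lengths), and for `k ≥ 1` the height of `δ_k` (the number of
nonzero rows, computed as `sInf {i | δ_k i = 0}`) equals `r`. -/
theorem stmt3 (r : ℕ) (f : ℕ → ℕ) (hr : 1 ≤ r)
    (hmono : ∀ i j, i ≤ j → f j ≤ f i)
    (hht : ∀ i, r - 1 ≤ i → f i = 0) :
    (∀ k, ∀ i j, i ≤ j → staircase r f k j ≤ staircase r f k i) ∧
      (∀ k, 1 ≤ k → sInf {i | staircase r f k i = 0} = r) := by
  have hfr : ∀ i, r ≤ i → f i = 0 := fun i hi => hht i (le_trans (Nat.sub_le r 1) hi)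
  have hmem : ∀ k, 1 ≤ k → (r - 1) ∈ {i | f i < k} := by
    intro k hk
    simp only [Set.mem_setOf_eq, hht (r - 1) le_rfl]
    omega
  have hcol : ∀ k, 1 ≤ k → colHt f k + 1 ≤ r := by
    intro k hk
    have h1 : colHt f k ≤ r - 1 := Nat.sInf_le (hmem k hk)
    omega
  have hcolmem : ∀ k, 1 ≤ k → f (colHt f k) < k := by
    intro k hk
    exact Nat.sInf_mem ⟨r - 1, hmem k hk⟩
  -- threshold facts
  have htle : ∀ k : ℕ, (if k = 0 then r else colHt f k + 1) ≤ r := by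
    intro k
    split_ifs with h
    · exact le_rfl
    · exact hcol k (Nat.one_le_iff_ne_zero.mpr h)
  -- rows at index ≥ r are always 0
  have hzero : ∀ k i, r ≤ i → staircase r f k i = 0 := by
    intro k
    induction k with
    | zero => exact fun i hi => hfr i hi
    | succ k ih =>
      intro i hi
      have ht := htle k
      simp only [staircase, addCol]
      rw [if_neg (by omega)]
      exact ih i hi
  -- upper bound: staircase k i ≤ max (f i) k
  have hub : ∀ k i, staircase r f k i ≤ max (f i) k := by
    intro k
    induction k with
    | zero => exact fun i => le_max_left _ _
    | succ k ih =>
      intro i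
      simp only [staircase, addCol]
      have hstep : staircase r f k i ≤ max (f i) (k + 1) :=
        le_trans (ih i) (max_le_max le_rfl (Nat.le_succ k))
      by_cases h : i < (if k = 0 then r else colHt f k + 1)
      · rw [if_pos h]; exact max_le hstep (le_max_right _ _)
      · rw [if_neg h]; exact hstep
  -- lower bound: for k ≥ 1, rows below r are nonzero
  have hlb : ∀ k, 1 ≤ k → ∀ i, i < r → 1 ≤ staircase r f k i := by
    intro k hk
    induction k with
    | zero => omega
    | succ k ih =>
      intro i hi
      simp only [staircase, addCol]
      rcases Nat.eq_zero_or_pos k with h0 | h0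
      · subst h0
        have hcond : i < (if (0:ℕ) = 0 then r else colHt f 0 + 1) := by
          simpa using hi
        rw [if_pos hcond]
        have hx := le_max_right (staircase r f 0 i) (0 + 1)
        omega
      · have h1 := ih h0 i hi
        by_cases h : i < (if k = 0 then r else colHt f k + 1)
        · rw [if_pos h]; exact le_trans h1 (le_max_left _ _)
        · rw [if_neg h]; exact h1
  -- key: beyond the threshold, previous diagram values are ≤ k + 1
  have hkey : ∀ k j, 1 ≤ k → colHt f k + 1 ≤ j → staircase r f k j ≤ k + 1 := by
    intro k j hk hj
    have hfj : f j < k := lt_of_le_of_lt (hmono (colHt f k) j (by omega)) (hcolmem k hk)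
    exact le_trans (hub k j) (max_le (by omega) (by omega))
  -- monotonicity
  have hmonoS : ∀ k, ∀ i j, i ≤ j → staircase r f k j ≤ staircase r f k i := by
    intro k
    induction k with
    | zero => exact hmono
    | succ k ih =>
      intro i j hij
      simp only [staircase, addCol]
      by_cases hj : j < (if k = 0 then r else colHt f k + 1)
      · rw [if_pos hj, if_pos (lt_of_le_of_lt hij hj)]
        exact max_le_max (ih i j hij) le_rfl
      · rw [if_neg hj]
        by_cases hi : i < (if k = 0 then r else colHt f k + 1)
        · rw [if_pos hi]
          rcases Nat.eq_zero_or_pos k with h0 | h0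
          · subst h0
            simp only [Nat.lt_irrefl, if_pos rfl, not_lt] at hj
            have : staircase r f 0 j = 0 := hfr j hj
            rw [this]
            exact Nat.zero_le _
          · rw [if_neg (by omega)] at hj
            exact le_trans (hkey k j h0 (by omega)) (le_max_right _ _)
        · rw [if_neg hi]
          exact ih i j hij
  refine ⟨hmonoS, ?_⟩
  intro k hk
  have hmemr : r ∈ {i | staircase r f k i = 0} := hzero k r le_rfl
  apply le_antisymm
  · exact Nat.sInf_le hmemr
  · apply le_csInf ⟨r, hmemr⟩
    intro i hi
    by_contra h
    have := hlb k hk i (by omega)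
    simp only [Set.mem_setOf_eq] at hi
    omega
end

section
/- Let δ be a Young diagram of height < r and width ≤ d − r + 1 where 0 < r ≤ d, and let s_k be the number of boxes added after k stages of the staircase algorithm applied to δ with parameter r. Then s_{d−r+1} ≤ d and s_{d−r+2} > d. -/
lemma le_colHt_iff (f : ℕ → ℕ) (hmono : ∀ i j, i ≤ j → f j ≤ f i) (m : ℕ)
    (hm : ∃ j, f j < m) (i : ℕ) :
    i ≤ colHt f m ↔ (i = 0 ∨ m ≤ f (i - 1)) := by
  have hmem : f (colHt f m) < m := Nat.sInf_mem hm
  constructor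
  · intro h
    by_cases h0 : i = 0
    · exact Or.inl h0
    · right
      by_contra hc
      push_neg at hc
      have : colHt f m ≤ i - 1 := Nat.sInf_le hc
      omega
  · rintro (h | h)
    · omega
    · by_contra hc
      push_neg at hc
      have : f (i - 1) ≤ f (colHt f m) := hmono _ _ (by omega)
      omega

lemma stair_eq (r : ℕ) (f : ℕ → ℕ) (hr : 0 < r)
    (hmono : ∀ i j, i ≤ j → f j ≤ f i)
    (hht : ∀ i, r - 1 ≤ i → f i = 0) :
    ∀ n i, staircase r f (n + 1) i =
      if i < r then
        (if i = 0 then max (f 0) (n + 1) else max (f i) (min (n + 1) (f (i - 1) + 1)))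
      else f i := by
  intro n
  induction n with
  | zero =>
    intro i
    show addCol (staircase r f 0) 1 (if 0 = 0 then r else colHt f 0 + 1) i = _
    rw [if_pos rfl]
    show (if i < r then max (f i) 1 else f i) = _
    by_cases hir : i < r
    · rw [if_pos hir, if_pos hir]
      by_cases h0 : i = 0
      · subst h0; rw [if_pos rfl]
      · rw [if_neg h0]; omega
    · rw [if_neg hir, if_neg hir]
  | succ k ih =>
    intro i
    have hne : f (r - 1) = 0 := hht _ le_rfl
    have hm : ∃ j, f j < k + 1 := ⟨r - 1, by omega⟩
    have hiff := le_colHt_iff f hmono (k + 1) hm i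
    show addCol (staircase r f (k + 1)) (k + 2)
        (if k + 1 = 0 then r else colHt f (k + 1) + 1) i = _
    rw [if_neg (by omega : ¬ k + 1 = 0)]
    unfold addCol
    rw [ih i]
    by_cases htouch : i < colHt f (k + 1) + 1
    · rw [if_pos htouch]
      have hcase : i = 0 ∨ k + 1 ≤ f (i - 1) := hiff.mp (by omega)
      by_cases h0 : i = 0
      · subst h0
        rw [if_pos hr, if_pos rfl, if_pos hr, if_pos rfl]
        omega
      · have hfi1 : k + 1 ≤ f (i - 1) := by tauto
        have hir : i < r := by
          by_contra hir
          have : f (i - 1) = 0 := hht _ (by omega)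
          omega
        rw [if_pos hir, if_neg h0, if_pos hir, if_neg h0]
        omega
    · rw [if_neg htouch]
      have hnc : ¬(i = 0 ∨ k + 1 ≤ f (i - 1)) := by
        intro h
        have := hiff.mpr h
        omega
      push_neg at hnc
      by_cases hir : i < r
      · rw [if_pos hir, if_pos hir, if_neg hnc.1, if_neg hnc.1]
        have := hnc.2
        omega
      · rw [if_neg hir, if_neg hir]

lemma tele (g : ℕ → ℕ) (hg : ∀ i j, i ≤ j → g j ≤ g i) (n : ℕ) :
    ∑ i ∈ Finset.range n, (g i - g (i + 1)) = g 0 - g n := by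
  induction n with
  | zero => simp
  | succ k ih =>
    rw [Finset.sum_range_succ, ih]
    have h1 : g (k + 1) ≤ g k := hg k (k + 1) (by omega)
    have h2 : g k ≤ g 0 := hg 0 k (by omega)
    omega

/-- With `s_k = |δ_k| - |δ|` the number of boxes added after `k` stages of the
staircase algorithm (for `δ` of height `< r` and width `≤ d - r + 1`, `0 < r ≤ d`),
one has `s_{d-r+1} ≤ d` and `s_{d-r+2} > d`. -/
theorem stmt4 (d r : ℕ) (f : ℕ → ℕ) (hr : 0 < r) (hrd : r ≤ d)
    (hmono : ∀ i j, i ≤ j → f j ≤ f i)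
    (hht : ∀ i, r - 1 ≤ i → f i = 0)
    (hwidth : f 0 ≤ d - r + 1) :
    (∑ i ∈ Finset.range r, staircase r f (d - r + 1) i) -
        (∑ i ∈ Finset.range r, f i) ≤ d ∧
      d < (∑ i ∈ Finset.range r, staircase r f (d - r + 2) i) -
        (∑ i ∈ Finset.range r, f i) := by
  have hrn : r = (r - 1) + 1 := by omega
  set n := r - 1 with hn
  have hfn : f n = 0 := hht n (by omega)
  have hse := stair_eq r f hr hmono hht
  have hsum_f : ∑ i ∈ Finset.range r, f i = (∑ i ∈ Finset.range n, f (i + 1)) + f 0 := by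
    have h1 := Finset.sum_range_succ' f n
    rw [← hrn] at h1
    exact h1
  have hsum_shift : (∑ i ∈ Finset.range n, f (i + 1)) + f 0 = (∑ i ∈ Finset.range n, f i) := by
    have h1 : ∑ i ∈ Finset.range (n + 1), f i = (∑ i ∈ Finset.range n, f (i + 1)) + f 0 :=
      Finset.sum_range_succ' f n
    have h2 : ∑ i ∈ Finset.range (n + 1), f i = (∑ i ∈ Finset.range n, f i) + f n :=
      Finset.sum_range_succ f n
    omega
  have hval : ∀ m : ℕ, ∑ i ∈ Finset.range r, staircase r f (m + 1) i =
      (∑ i ∈ Finset.range n, max (f (i + 1)) (min (m + 1) (f i + 1))) + max (f 0) (m + 1) := by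
    intro m
    have h1 := Finset.sum_range_succ' (fun i => staircase r f (m + 1) i) n
    rw [← hrn] at h1
    rw [h1]
    congr 1
    · apply Finset.sum_congr rfl
      intro i hi
      have hi' : i < n := Finset.mem_range.mp hi
      rw [hse m (i + 1), if_pos (by omega), if_neg (by omega)]
      simp
    · rw [hse m 0, if_pos (by omega), if_pos rfl]
  have hm2' : d - r + 2 = (d - r + 1) + 1 := by omega
  have hB2 : ∑ i ∈ Finset.range r, staircase r f (d - r + 2) i
      = (∑ i ∈ Finset.range r, f i) + d + 1 := by
    rw [hm2', hval]
    have hstep : ∀ i ∈ Finset.range n,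
        max (f (i + 1)) (min ((d - r + 1) + 1) (f i + 1)) = f i + 1 := by
      intro i _
      have h1 : f i ≤ f 0 := hmono 0 i (by omega)
      have h2 : f (i + 1) ≤ f i := hmono i (i + 1) (by omega)
      omega
    rw [Finset.sum_congr rfl hstep]
    have hsum1 : ∑ i ∈ Finset.range n, (f i + 1) = (∑ i ∈ Finset.range n, f i) + n := by
      rw [Finset.sum_add_distrib]
      simp
    have hmax0 : max (f 0) ((d - r + 1) + 1) = d - r + 2 := by omega
    omega
  have hB1 : ∑ i ∈ Finset.range r, staircase r f (d - r + 1) i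
      ≤ (∑ i ∈ Finset.range r, f i) + d := by
    rw [hval]
    set g : ℕ → ℕ := fun i => min (d - r + 1) (f i) with hg
    have hgmono : ∀ i j, i ≤ j → g j ≤ g i := by
      intro i j hij
      have := hmono i j hij
      simp only [hg]
      omega
    calc (∑ i ∈ Finset.range n, max (f (i + 1)) (min ((d - r) + 1) (f i + 1)))
          + max (f 0) ((d - r) + 1)
        ≤ (∑ i ∈ Finset.range n, (f (i + 1) + (g i - g (i + 1)) + 1))
            + max (f 0) ((d - r) + 1) := by
          gcongr with i hi
          have h2 : f (i + 1) ≤ f i := hmono i (i + 1) (by omega)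
          simp only [hg]
          omega
      _ = (∑ i ∈ Finset.range n, f (i + 1)) + (∑ i ∈ Finset.range n, (g i - g (i + 1))) + n
            + max (f 0) ((d - r) + 1) := by
          rw [Finset.sum_add_distrib, Finset.sum_add_distrib]
          simp
      _ ≤ (∑ i ∈ Finset.range r, f i) + d := by
          rw [tele g hgmono n]
          have hgn : g n = 0 := by simp [hg, hfn]
          have hg0 : g 0 ≤ d - r + 1 := by simp [hg]
          have hg0' : g 0 ≤ f 0 := by simp [hg]
          have hmax : max (f 0) ((d - r) + 1) ≤ f 0 + ((d - r + 1) - g 0) := by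
            simp only [hg]
            omega
          omega
  have hAle : ∀ m : ℕ, (∑ i ∈ Finset.range r, f i)
      ≤ ∑ i ∈ Finset.range r, staircase r f (m + 1) i := by
    intro m
    apply Finset.sum_le_sum
    intro i _
    rw [hse m i]
    by_cases hir : i < r
    · rw [if_pos hir]
      by_cases h0 : i = 0
      · subst h0; rw [if_pos rfl]; omega
      · rw [if_neg h0]; omega
    · rw [if_neg hir]
  have hA1 := hAle (d - r)
  have hA2 := hAle (d - r + 1)
  rw [← hm2'] at hA2
  have h1' : d - r + 1 = (d - r) + 1 := rfl
  rw [← h1'] at hA1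
  constructor
  · omega
  · omega
end

section
/- Let δ be a Young diagram of height < r and width strictly less than d − r + 1, where 0 < r ≤ d, and apply the staircase algorithm with parameter r to obtain δ_0 = δ, δ_1, …, δ_K with K = d − r + 1 and box counts s_k = |δ_k| − |δ|. Then s_K = d; the width of δ_k is < d − r + 1 for all k < K; and the width of δ_K equals d − r + 1. -/
lemma staircase_formula (r : ℕ) (f : ℕ → ℕ) (hr : 0 < r)
    (hmono : ∀ i j, i ≤ j → f j ≤ f i)
    (hht : ∀ i, r - 1 ≤ i → f i = 0) :
    ∀ k i, staircase r f (k+1) i =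
      if i < r then max (f i) (min (k+1) (if i = 0 then k+1 else f (i-1) + 1)) else f i := by
  intro k
  induction k with
  | zero =>
    intro i
    show addCol (staircase r f 0) 1 (if (0:ℕ) = 0 then r else colHt f 0 + 1) i = _
    simp only [if_pos rfl]
    show addCol f 1 r i = _
    unfold addCol
    rcases Nat.eq_zero_or_pos i with hi0 | hi0 <;> split_ifs <;> omega
  | succ k ih =>
    intro i
    have hne : (k + 1 : ℕ) ≠ 0 := Nat.succ_ne_zero k
    have hmem : r - 1 ∈ {i | f i < k + 1} := by
      simp only [Set.mem_setOf_eq]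
      rw [hht (r-1) le_rfl]; omega
    have hfh : f (colHt f (k+1)) < k + 1 := Nat.sInf_mem ⟨_, hmem⟩
    have hhr : colHt f (k+1) ≤ r - 1 := Nat.sInf_le hmem
    have hB : ∀ i, i < colHt f (k+1) → k + 1 ≤ f i := by
      intro j hj
      by_contra hc
      have hmem2 : j ∈ {i | f i < k + 1} := by simp only [Set.mem_setOf_eq]; omega
      exact absurd hmem2 (Nat.notMem_of_lt_sInf hj)
    show addCol (staircase r f (k+1)) (k+2) (if (k+1:ℕ) = 0 then r else colHt f (k+1) + 1) i = _
    rw [if_neg hne]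
    unfold addCol
    rw [ih i]
    set h := colHt f (k+1) with hh
    have hC : h + 1 ≤ i → f (i-1) ≤ f h := fun hhi => hmono h (i-1) (by omega)
    rcases Nat.eq_zero_or_pos i with hi0 | hi0
    · subst hi0
      split_ifs <;> omega
    · have hB' : i ≤ h → k + 1 ≤ f (i-1) := fun hih => hB (i-1) (by omega)
      split_ifs <;> omega
/-- For `δ` of height `< r` and width `< d - r + 1` (with `0 < r ≤ d`) and
`K = d - r + 1`: `s_K = d`; the width of `δ_k` is `< d - r + 1` for `k < K`;
and the width of `δ_K` equals `d - r + 1`. -/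
theorem stmt5 (d r : ℕ) (f : ℕ → ℕ) (hr : 0 < r) (hrd : r ≤ d)
    (hmono : ∀ i j, i ≤ j → f j ≤ f i)
    (hht : ∀ i, r - 1 ≤ i → f i = 0)
    (hwidth : f 0 < d - r + 1) :
    (∑ i ∈ Finset.range r, staircase r f (d - r + 1) i) -
        (∑ i ∈ Finset.range r, f i) = d ∧
      (∀ k, k < d - r + 1 → staircase r f k 0 < d - r + 1) ∧
      staircase r f (d - r + 1) 0 = d - r + 1 := by
  have F := staircase_formula r f hr hmono hht
  have h0 : staircase r f (d - r + 1) 0 = d - r + 1 := by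
    rw [F (d - r) 0]
    split_ifs <;> omega
  have hterm : ∀ i < r - 1, staircase r f (d - r + 1) (i + 1) = f i + 1 := by
    intro i hi
    rw [F (d - r) (i + 1)]
    have h1 : f i ≤ f 0 := hmono 0 i (Nat.zero_le _)
    have h2 : f (i + 1) ≤ f i := hmono i (i + 1) (Nat.le_succ _)
    simp only [Nat.add_sub_cancel]
    rw [if_pos (show i + 1 < r by omega), if_neg (Nat.succ_ne_zero i),
      min_eq_right (by omega), max_eq_right (by omega)]
  have hrange : Finset.range r = Finset.range (r - 1 + 1) := by
    rw [Nat.sub_add_cancel hr]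
  have e1 : ∑ i ∈ Finset.range (r - 1 + 1), staircase r f (d - r + 1) i =
      (∑ i ∈ Finset.range (r - 1), f i) + (r - 1) + (d - r + 1) := by
    rw [Finset.sum_range_succ', h0,
      Finset.sum_congr rfl fun i hi => hterm i (Finset.mem_range.mp hi),
      Finset.sum_add_distrib, Finset.sum_const, smul_eq_mul, mul_one, Finset.card_range]
  have e2 : ∑ i ∈ Finset.range (r - 1 + 1), f i = ∑ i ∈ Finset.range (r - 1), f i := by
    rw [Finset.sum_range_succ, hht (r - 1) le_rfl, Nat.add_zero]
  refine ⟨?_, ?_, ?_⟩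
  · rw [hrange, e1, e2]; omega
  · intro k hk
    match k with
    | 0 => exact hwidth
    | m + 1 =>
      rw [F m 0]
      split_ifs <;> omega
  · exact h0
end

section
/- Let δ be a Young diagram of height < r and width strictly less than d − r + 1 (with 0 < r ≤ d), and let δ_K with K = d − r + 1 be the K-th diagram produced by the staircase algorithm with parameter r. Then deleting the first row and the first column from δ_K recovers δ; that is, (δ_K)^{i+1} − 1 = δ^i for all 1 ≤ i ≤ r − 1. -/
lemma colHt_lt_iff (f : ℕ → ℕ) (r : ℕ) (hr : 0 < r)
    (hmono : ∀ i j, i ≤ j → f j ≤ f i) (hht : ∀ i, r - 1 ≤ i → f i = 0)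
    (k i : ℕ) (hk : 0 < k) : i < colHt f k ↔ k ≤ f i := by
  unfold colHt
  have hne : {j | f j < k}.Nonempty := ⟨r - 1, by simp [hht (r-1) le_rfl, hk]⟩
  constructor
  · intro h
    by_contra hle
    push_neg at hle
    have : sInf {j | f j < k} ≤ i := Nat.sInf_le (Set.mem_setOf.mpr hle)
    omega
  · intro h
    by_contra hle
    push_neg at hle
    have hm : f (sInf {j | f j < k}) < k := Nat.sInf_mem hne
    have := hmono _ _ hle
    omega

lemma stair_val (r : ℕ) (f : ℕ → ℕ) (hr : 0 < r)
    (hmono : ∀ i j, i ≤ j → f j ≤ f i) (hht : ∀ i, r - 1 ≤ i → f i = 0)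
    (i : ℕ) (hi : i < r - 1) :
    ∀ m, staircase r f (m + 1) (i + 1) = max (f (i + 1)) (min (f i) m + 1) := by
  intro m
  induction m with
  | zero =>
    have h1 : i + 1 < r := by omega
    simp [staircase, addCol, h1]
  | succ m ih =>
    have hcol := colHt_lt_iff f r hr hmono hht (m + 1) i (by omega)
    show addCol (staircase r f (m + 1)) (m + 1 + 1)
        (if m + 1 = 0 then r else colHt f (m + 1) + 1) (i + 1)
      = max (f (i + 1)) (min (f i) (m + 1) + 1)
    simp only [Nat.succ_ne_zero, if_false, addCol, ih]
    by_cases h : m + 1 ≤ f i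
    · have := hcol.mpr h
      rw [if_pos (by omega)]
      simp only [Nat.max_def, Nat.min_def]
      split_ifs <;> omega
    · rw [if_neg (by intro hc; exact h (hcol.mp (by omega)))]
      simp only [Nat.max_def, Nat.min_def]
      split_ifs <;> omega

/-- For `δ` of height `< r` and width `< d - r + 1` (with `0 < r ≤ d`), deleting
the first row and the first column from `δ_K` (`K = d - r + 1`) recovers `δ`:
in 0-indexed terms, `δ_K (i+1) = δ i + 1` for all `i < r - 1`. -/
theorem stmt6 (d r : ℕ) (f : ℕ → ℕ) (hr : 0 < r) (hrd : r ≤ d)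
    (hmono : ∀ i j, i ≤ j → f j ≤ f i)
    (hht : ∀ i, r - 1 ≤ i → f i = 0)
    (hwidth : f 0 < d - r + 1) :
    ∀ i, i < r - 1 → staircase r f (d - r + 1) (i + 1) = f i + 1 := by
  intro i hi
  have h := stair_val r f hr hmono hht i hi (d - r)
  have h0 : f i ≤ f 0 := hmono 0 i (Nat.zero_le i)
  have h1 : f (i + 1) ≤ f i := hmono i (i + 1) (by omega)
  rw [h]
  simp only [Nat.max_def, Nat.min_def]
  split_ifs <;> omega
end

section
/- Let δ be a Young diagram of height < r and width ≤ d − r + 1 (with 0 < r ≤ d), let δ_0, …, δ_K be the staircase sequence (K = d − r + 1), and set ε_k = c_{d−r+1, r}(δ_k), the rotated complement of δ_k inside the (d−r+1)×r rectangle. Then the width of ε_0 is exactly d − r + 1, the width of ε_k is strictly less than d − r + 1 for all k ≥ 1, and the height of ε_k is at most r for all k ≤ K. -/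
/-- Row lengths (0-indexed) of the rotated complement of a Young diagram inside a
`w × h` rectangle. -/
def ydComp (w h : ℕ) (f : ℕ → ℕ) : ℕ → ℕ :=
  fun i => if i < h then w - f (h - 1 - i) else 0

/-- Setting `ε_k = c_{d-r+1,r}(δ_k)`: the width of `ε_0` is exactly `d - r + 1`,
the width of `ε_k` is `< d - r + 1` for `1 ≤ k ≤ K`, and the height of `ε_k`
(computed as `sInf {i | ε_k i = 0}`) is at most `r` for all `k ≤ K`, where
`K = d - r + 1`. -/
theorem stmt8 (d r : ℕ) (f : ℕ → ℕ) (hr : 0 < r) (hrd : r ≤ d)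
    (hmono : ∀ i j, i ≤ j → f j ≤ f i)
    (hht : ∀ i, r - 1 ≤ i → f i = 0)
    (hwidth : f 0 ≤ d - r + 1) :
    ydComp (d - r + 1) r (staircase r f 0) 0 = d - r + 1 ∧
      (∀ k, 1 ≤ k → k ≤ d - r + 1 →
        ydComp (d - r + 1) r (staircase r f k) 0 < d - r + 1) ∧
      (∀ k, k ≤ d - r + 1 →
        sInf {i | ydComp (d - r + 1) r (staircase r f k) i = 0} ≤ r) := by
  have hr1 : r - 1 < r := Nat.sub_lt hr one_pos
  have key : ∀ k, 1 ≤ k → 1 ≤ staircase r f k (r - 1) := by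
    intro k hk
    induction k with
    | zero => omega
    | succ k ih =>
      rcases Nat.eq_zero_or_pos k with h0 | h0
      · subst h0
        simp [staircase, addCol, hr1]
      · have h1 := ih h0
        simp only [staircase, addCol]
        rw [if_neg (Nat.pos_iff_ne_zero.mp h0)]
        split
        · exact le_max_of_le_left h1
        · exact h1
  refine ⟨?_, ?_, ?_⟩
  · simp [ydComp, staircase, hr, hht (r - 1) le_rfl]
  · intro k hk hk2
    have hs := key k hk
    simp only [ydComp, hr, if_pos, Nat.sub_zero]
    omega
  · intro k hk
    apply Nat.sInf_le
    simp [ydComp, Set.mem_setOf_eq]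
end

section
/- Let δ be a Young diagram of height < r and width ≤ d − r + 1, with staircase sequence δ_0, δ_1, … and box counts s_k, and suppose the width of δ equals d − r + 1 in case k = 0. For each k ≤ d − r + 1 such that δ_k has width d − r + 1, the diagram ĥδ_k obtained from δ_k by deleting its first row satisfies: the sequence ĥδ_0, ĥδ_1, … equals the staircase sequence obtained by applying the staircase algorithm with parameter r − 1 to the starting diagram ĥδ_0, and the number of boxes added agrees: |ĥδ_k| − |ĥδ_0| = s_k. -/
lemma shift_sInf (S : Set ℕ) (hS : S.Nonempty) (h0 : 0 ∉ S) :
    sInf S = sInf {i | i + 1 ∈ S} + 1 := by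
  have hS' : {i | i + 1 ∈ S}.Nonempty := by
    obtain ⟨n, hn⟩ := hS
    cases n with
    | zero => exact absurd hn h0
    | succ m => exact ⟨m, hn⟩
  apply le_antisymm
  · exact Nat.sInf_le (Nat.sInf_mem hS')
  · apply le_csInf hS
    intro j hj
    cases j with
    | zero => exact absurd hj h0
    | succ m => exact Nat.succ_le_succ (Nat.sInf_le hj)

/-- For `δ` of height `< r` and width exactly `d - r + 1` (so each `δ_k` has width
`d - r + 1`), deleting the first row of each `δ_k` yields exactly the staircase
sequence with parameter `r - 1` applied to the first-row-deleted diagram, and the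
box counts agree: `|δ̂_k| - |δ̂_0| = s_k`. -/
theorem stmt11 (d r : ℕ) (f : ℕ → ℕ) (hr : 0 < r) (hrd : r ≤ d)
    (hmono : ∀ i j, i ≤ j → f j ≤ f i)
    (hht : ∀ i, r - 1 ≤ i → f i = 0)
    (hwidth : f 0 = d - r + 1) :
    ∀ k, k ≤ d - r + 1 →
      (fun i => staircase r f k (i + 1)) = staircase (r - 1) (fun i => f (i + 1)) k ∧
        (∑ i ∈ Finset.range (r - 1), staircase (r - 1) (fun i => f (i + 1)) k i) -
            (∑ i ∈ Finset.range (r - 1), f (i + 1)) =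
          (∑ i ∈ Finset.range r, staircase r f k i) - (∑ i ∈ Finset.range r, f i) := by
  have hrow0 : ∀ k, k ≤ d - r + 1 → staircase r f k 0 = f 0 := by
    intro k
    induction k with
    | zero => intro _; rfl
    | succ k ih =>
      intro hk
      have hk' : k ≤ d - r + 1 := by omega
      have ht : 0 < (if k = 0 then r else colHt f k + 1) := by split <;> omega
      simp only [staircase, addCol, if_pos ht, ih hk']
      omega
  have hshift : ∀ k, k ≤ d - r + 1 →
      (fun i => staircase r f k (i + 1)) = staircase (r - 1) (fun i => f (i + 1)) k := by
    intro k
    induction k with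
    | zero => intro _; rfl
    | succ k ih =>
      intro hk
      have hk' : k ≤ d - r + 1 := by omega
      have IH := ih hk'
      funext i
      have hA : staircase r f k (i + 1) = staircase (r - 1) (fun i => f (i + 1)) k i :=
        congrFun IH i
      simp only [staircase, addCol]
      rcases Nat.eq_zero_or_pos k with hk0 | hk1
      · subst hk0
        simp only [eq_self_iff_true, if_true]
        by_cases h : i + 1 < r
        · rw [if_pos h, if_pos (by omega), hA]
        · rw [if_neg h, if_neg (by omega), hA]
      · have hne : k ≠ 0 := by omega
        simp only [if_neg hne]
        have hcol : colHt f k = colHt (fun i => f (i + 1)) k + 1 := by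
          have hnon : ({i | f i < k} : Set ℕ).Nonempty :=
            ⟨r - 1, by simp only [Set.mem_setOf_eq, hht (r - 1) le_rfl]; omega⟩
          have h0 : (0 : ℕ) ∉ ({i | f i < k} : Set ℕ) := by
            simp only [Set.mem_setOf_eq, hwidth]; omega
          exact shift_sInf _ hnon h0
        by_cases h : i + 1 < colHt f k + 1
        · rw [if_pos h, if_pos (by omega), hA]
        · rw [if_neg h, if_neg (by omega), hA]
  have hsum : ∀ h : ℕ → ℕ,
      ∑ i ∈ Finset.range r, h i = (∑ i ∈ Finset.range (r - 1), h (i + 1)) + h 0 := by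
    intro h
    obtain ⟨m, hm⟩ : ∃ m, r = m + 1 := ⟨r - 1, by omega⟩
    rw [hm, Nat.add_sub_cancel, Finset.sum_range_succ']
  intro k hk
  refine ⟨hshift k hk, ?_⟩
  rw [hsum (staircase r f k), hsum f, hrow0 k hk]
  rw [show (∑ i ∈ Finset.range (r - 1), staircase r f k (i + 1)) =
      ∑ i ∈ Finset.range (r - 1), staircase (r - 1) (fun i => f (i + 1)) k i from
    Finset.sum_congr rfl fun i _ => congrFun (hshift k hk) i]
  omega
end

section
/- Let r ≥ 1 and δ = (δ^1, …, δ^{r−1}) a partition of height < r; set δ^0 = ∞. For i ≥ 0 let α(i) = (δ^1, …, δ^{r−1}, i). If there is an integer 0 ≤ l ≤ r − 1 with δ^{r−l} < i − l ≤ δ^{r−l−1}, then the cycle w = (r−l, r−l+1, …, r) ∈ S_r has length l and satisfies w • α(i) = (δ^1, …, δ^{r−l−1}, i−l, δ^{r−l}+1, …, δ^{r−1}+1), which is a dominant weight (non-increasing). -/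
/-- `ρ = (r, r-1, …, 1)` as a function on `Fin r` (0-indexed). -/
def rho (r : ℕ) (i : Fin r) : ℤ := (r : ℤ) - (i : ℤ)

/-- The dot (ρ-shifted) action `w • α = w(α + ρ) - ρ` of the Weyl group `S_r` on
integer weights of `GL_r` (the symmetric group permutes coordinates). -/
def dotAct {r : ℕ} (w : Equiv.Perm (Fin r)) (a : Fin r → ℤ) : Fin r → ℤ :=
  fun i => a (w.symm i) + rho r (w.symm i) - rho r i

/-- The weight `α(i) = (δ^1, …, δ^{r-1}, i)`, where the partition `δ` is given by
its 0-indexed row lengths `f` (so `δ^j = f (j-1)`). -/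
def alphaWt (r : ℕ) (f : ℕ → ℕ) (i : ℕ) : Fin r → ℤ :=
  fun j => if (j : ℕ) < r - 1 then (f j : ℤ) else (i : ℤ)

/-- A weight is dominant if its entries are non-increasing. -/
def Dominant {r : ℕ} (a : Fin r → ℤ) : Prop := ∀ j k : Fin r, j ≤ k → a k ≤ a j

/-- The Coxeter length of a permutation: its number of inversions. -/
def inversions {r : ℕ} (w : Equiv.Perm (Fin r)) : ℕ :=
  (Finset.univ.filter fun p : Fin r × Fin r => p.1 < p.2 ∧ w p.2 < w p.1).card

/-- A weight is regular for the dot action iff `α + ρ` has pairwise distinct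
entries. -/
def RegularWt {r : ℕ} (a : Fin r → ℤ) : Prop :=
  Function.Injective fun j => a j + rho r j

/-- If `δ^{r-l} < i - l ≤ δ^{r-l-1}` (the upper bound being vacuous for
`l = r - 1`), then the cycle `w = (r-l, r-l+1, …, r)` — which sends position `r`
to position `r-l` and shifts positions `r-l, …, r-1` up by one — has length `l`,
and `w • α(i) = (δ^1, …, δ^{r-l-1}, i-l, δ^{r-l}+1, …, δ^{r-1}+1)`, which is a
dominant weight.  (All positions are converted to 0-indexing on `Fin r`.) -/
theorem stmt15 (r : ℕ) (f : ℕ → ℕ) (hr : 1 ≤ r)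
    (hmono : ∀ i j, i ≤ j → f j ≤ f i)
    (hht : ∀ i, r - 1 ≤ i → f i = 0)
    (i l : ℕ) (hl : l ≤ r - 1)
    (hlow : f (r - l - 1) + l < i)
    (hhigh : l < r - 1 → i ≤ f (r - l - 2) + l)
    (w : Equiv.Perm (Fin r))
    (hw : ∀ j : Fin r, (w j : ℕ) =
      if (j : ℕ) = r - 1 then r - 1 - l
      else if r - 1 - l ≤ (j : ℕ) then (j : ℕ) + 1 else (j : ℕ)) :
    inversions w = l ∧
      (∀ j : Fin r, dotAct w (alphaWt r f i) j =
        if (j : ℕ) < r - 1 - l then (f j : ℤ)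
        else if (j : ℕ) = r - 1 - l then (i : ℤ) - (l : ℤ)
        else (f ((j : ℕ) - 1) : ℤ) + 1) ∧
      Dominant (dotAct w (alphaWt r f i)) := by
  have hrl : r - 1 - l + l = r - 1 := by omega
  set m := r - 1 - l with hm
  have hsymm : ∀ j : Fin r, (w.symm j : ℕ) =
      if (j : ℕ) = m then r - 1
      else if m ≤ (j : ℕ) then (j : ℕ) - 1 else (j : ℕ) := by
    intro j
    have h2 := hw (w.symm j)
    rw [w.apply_symm_apply j] at h2
    have hk : (w.symm j : ℕ) < r := (w.symm j).isLt
    have hj : (j : ℕ) < r := j.isLt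
    split_ifs at h2 ⊢ <;> omega
  have hform : ∀ j : Fin r, dotAct w (alphaWt r f i) j =
      if (j : ℕ) < m then (f j : ℤ)
      else if (j : ℕ) = m then (i : ℤ) - (l : ℤ)
      else (f ((j : ℕ) - 1) : ℤ) + 1 := by
    intro j
    have hk := hsymm j
    have hkl : (w.symm j : ℕ) < r := (w.symm j).isLt
    have hj : (j : ℕ) < r := j.isLt
    simp only [dotAct, alphaWt, rho]
    split_ifs at hk ⊢ <;> simp only [hk] <;> omega
  have hmem : ∀ a b : Fin r, (a < b ∧ w b < w a) ↔
      ((b : ℕ) = r - 1 ∧ m ≤ (a : ℕ) ∧ (a : ℕ) < r - 1) := by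
    intro a b
    have ha := hw a
    have hb := hw b
    have ha' : (a : ℕ) < r := a.isLt
    have hb' : (b : ℕ) < r := b.isLt
    rw [Fin.lt_def, Fin.lt_def, ha, hb]
    split_ifs <;> omega
  have hinv : inversions w = l := by
    unfold inversions
    apply Finset.card_eq_of_bijective
      (fun t ht => ((⟨m + t, by omega⟩ : Fin r), (⟨r - 1, by omega⟩ : Fin r)))
    · intro p hp
      rw [Finset.mem_filter] at hp
      obtain ⟨h1, h2⟩ := (hmem p.1 p.2).mp hp.2
      refine ⟨(p.1 : ℕ) - m, by omega, ?_⟩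
      rw [Prod.ext_iff]
      refine ⟨Fin.ext ?_, Fin.ext ?_⟩ <;> simp <;> omega
    · intro t ht
      rw [Finset.mem_filter]
      refine ⟨Finset.mem_univ _, (hmem _ _).mpr ?_⟩
      simp
      omega
    · intro t t' ht ht' he
      rw [Prod.ext_iff, Fin.ext_iff] at he
      simp at he
      omega
  have hdom : Dominant (dotAct w (alphaWt r f i)) := by
    intro j k hjk
    have hjk' : (j : ℕ) ≤ (k : ℕ) := hjk
    have hj : (j : ℕ) < r := j.isLt
    have hk : (k : ℕ) < r := k.isLt
    rw [hform j, hform k]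
    split_ifs with h1 h2 h3 h4 h5 h6 h7 h8
    · have := hmono j k hjk'; omega
    · omega
    · omega
    · -- k = m, j < m
      have hc := hhigh (by omega)
      have := hmono j (r - l - 2) (by omega)
      omega
    · omega
    · omega
    · -- k > m, j < m
      have hc := hhigh (by omega)
      have h9 := hmono j (r - l - 2) (by omega)
      have h10 := hmono (r - l - 1) ((k : ℕ) - 1) (by omega)
      omega
    · -- k > m, j = m
      have h10 := hmono (r - l - 1) ((k : ℕ) - 1) (by omega)
      omega
    · -- both > m
      have := hmono ((j : ℕ) - 1) ((k : ℕ) - 1) (by omega)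
      omega
  exact ⟨hinv, hform, hdom⟩
end

section
/- Let δ be a Young diagram of height < r and width ≤ d − r + 1 (0 < r ≤ d), with staircase sequence δ_0, δ_1, … and box counts s_k = |δ_k| − |δ|. For each i ≥ 0 such that the weight α(i) = (δ^1, …, δ^{r−1}, i) is regular, let l(i) be the length of the unique Weyl group element w(i) making w(i) • α(i) dominant. Then w(i) • α(i) = δ_{i − l(i)} and s_{i − l(i)} = i; in particular, for each k the equation k = i − l(i) over regular indices i has at most one solution. -/
lemma aux_count_lt (r q : ℕ) (hq : q ≤ r) :
    (Finset.univ.filter fun u : Fin r => (u : ℕ) < q).card = q := by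
  rcases Nat.eq_zero_or_pos r with hr | hr
  · subst hr
    have hq0 : q = 0 := by omega
    subst hq0; simp
  rw [← Finset.card_range q]
  apply Finset.card_nbij' (i := fun u : Fin r => (u : ℕ))
      (j := fun x => (⟨x % r, Nat.mod_lt _ hr⟩ : Fin r))
  · intro a ha; simp at ha ⊢; omega
  · intro a ha; simp at ha ⊢; rw [Nat.mod_eq_of_lt (by omega)]; omega
  · intro a ha; simp at ha ⊢
    exact Fin.ext (by simp [Nat.mod_eq_of_lt a.isLt])
  · intro a ha; simp at ha ⊢; exact Nat.mod_eq_of_lt (by omega)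

lemma aux_count_or (n q : ℕ) (hq : q ≤ n) :
    (Finset.univ.filter fun u : Fin (n+1) => (u : ℕ) < q ∨ (u : ℕ) = n).card = q + 1 := by
  have : (Finset.univ.filter fun u : Fin (n+1) => (u : ℕ) < q ∨ (u : ℕ) = n)
      = (Finset.univ.filter fun u : Fin (n+1) => (u : ℕ) < q) ∪ {Fin.last n} := by
    ext u
    simp [Fin.ext_iff, Fin.last]
    exact Or.comm
  rw [this, Finset.card_union_of_disjoint, aux_count_lt _ _ (by omega)]
  · simp
  · simp [Finset.disjoint_singleton_right, Fin.last]; omega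

lemma colHt_iff (f : ℕ → ℕ) (hmono : ∀ i j, i ≤ j → f j ≤ f i)
    (k : ℕ) (hne : ∃ i, f i < k) (j : ℕ) : j < colHt f k ↔ k ≤ f j := by
  have hmem : f (colHt f k) < k := Nat.sInf_mem hne
  constructor
  · intro h
    have := Nat.notMem_of_lt_sInf (s := {i | f i < k}) h
    simp only [Set.mem_setOf_eq] at this; omega
  · intro h
    by_contra hc
    have := hmono (colHt f k) j (by omega)
    omega

lemma stair_closed (r : ℕ) (f : ℕ → ℕ) (hr : 0 < r)
    (hmono : ∀ i j, i ≤ j → f j ≤ f i) (hht : ∀ i, r - 1 ≤ i → f i = 0)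
    (k : ℕ) (hk : 1 ≤ k) (j : ℕ) :
    staircase r f k j = if j = 0 then max (f 0) k
      else if j < r then max (f j) (min k (f (j-1) + 1)) else f j := by
  induction k with
  | zero => omega
  | succ k ih =>
    rcases Nat.eq_zero_or_pos k with hk0 | hk1
    · subst hk0
      show addCol f 1 r j = _
      unfold addCol
      rcases Nat.eq_zero_or_pos j with hj0 | hj1
      · subst hj0; split_ifs <;> omega
      · split_ifs <;> omega
    · have hfr : f (r - 1) = 0 := hht _ le_rfl
      have hnef : ∃ i, f i < k := ⟨r - 1, by omega⟩
      have hch := colHt_iff f hmono k hnef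
      have hhle : colHt f k ≤ r - 1 := by
        by_contra hc
        have := (hch (r-1)).1 (by omega)
        omega
      show addCol (staircase r f k) (k+1) (if k = 0 then r else colHt f k + 1) j = _
      rw [if_neg (by omega : ¬ k = 0)]
      unfold addCol
      rw [ih hk1]
      rcases Nat.eq_zero_or_pos j with hj0 | hj1
      · subst hj0; split_ifs <;> omega
      · by_cases hjr : j < r
        · by_cases hcase : k ≤ f (j - 1)
          · have hcond : j < colHt f k + 1 := by
              have := (hch (j-1)).2 hcase; omega
            split_ifs <;> omega
          · have hcond : ¬ (j < colHt f k + 1) := by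
              intro h
              exact hcase ((hch (j-1)).1 (by omega))
            split_ifs <;> omega
        · have hcond : ¬ (j < colHt f k + 1) := by omega
          split_ifs <;> omega

/-- For every `i` with `α(i) = (δ^1, …, δ^{r-1}, i)` regular, if `w` is the
(automatically unique) Weyl group element making `w • α(i)` dominant, and
`l(i)` is its length, then `w • α(i)` is the staircase diagram `δ_{i - l(i)}` and
`s_{i - l(i)} = i`.  In particular `i ↦ i - l(i)` is injective on regular
indices. -/
theorem stmt17 (d r : ℕ) (f : ℕ → ℕ) (hr : 0 < r) (hrd : r ≤ d)
    (hmono : ∀ i j, i ≤ j → f j ≤ f i)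
    (hht : ∀ i, r - 1 ≤ i → f i = 0)
    (hwidth : f 0 ≤ d - r + 1) :
    (∀ (i : ℕ) (w : Equiv.Perm (Fin r)),
        RegularWt (alphaWt r f i) → Dominant (dotAct w (alphaWt r f i)) →
        (∀ j : Fin r, dotAct w (alphaWt r f i) j =
            (staircase r f (i - inversions w) (j : ℕ) : ℤ)) ∧
          (∑ t ∈ Finset.range r, staircase r f (i - inversions w) t) -
              (∑ t ∈ Finset.range r, f t) = i) ∧
      ∀ (i i' : ℕ) (w w' : Equiv.Perm (Fin r)),
        RegularWt (alphaWt r f i) → Dominant (dotAct w (alphaWt r f i)) →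
        RegularWt (alphaWt r f i') → Dominant (dotAct w' (alphaWt r f i')) →
        i - inversions w = i' - inversions w' → i = i' := by
  obtain ⟨n, rfl⟩ : ∃ n, r = n + 1 := ⟨r - 1, by omega⟩
  have key : ∀ (i : ℕ) (w : Equiv.Perm (Fin (n+1))),
      RegularWt (alphaWt (n+1) f i) → Dominant (dotAct w (alphaWt (n+1) f i)) →
      (∀ j : Fin (n+1), dotAct w (alphaWt (n+1) f i) j =
          (staircase (n+1) f (i - inversions w) (j : ℕ) : ℤ)) ∧
        (∑ t ∈ Finset.range (n+1), staircase (n+1) f (i - inversions w) t) -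
            (∑ t ∈ Finset.range (n+1), f t) = i := by
    intro i w hreg hdom
    set b : Fin (n+1) → ℤ := fun j => alphaWt (n+1) f i j + rho (n+1) j with hb
    have hbinj : Function.Injective b := hreg
    have hbdef : ∀ j : Fin (n+1), (j : ℕ) < n → b j = (f j : ℤ) + (n+1) - j := by
      intro j hj
      simp only [hb, alphaWt, rho]
      rw [if_pos (by simpa using hj)]
      push_cast; ring
    have hblast : b (Fin.last n) = (i : ℤ) + 1 := by
      simp only [hb, alphaWt, rho, Fin.last]
      rw [if_neg (by simp)]
      push_cast; ring
    have hbanti : ∀ s t : Fin (n+1), s < t → (t : ℕ) < n → b t < b s := by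
      intro s t hst htn
      have hst' : (s : ℕ) < (t : ℕ) := hst
      have hfs := hmono (s : ℕ) (t : ℕ) (le_of_lt hst')
      rw [hbdef t htn, hbdef s (by omega)]
      push_cast
      omega
    -- the count m, position p, target value k
    set m : ℕ := ((Finset.range n).filter fun j => f j + (n+1) ≤ i + j).card with hm
    set p : ℕ := n - m with hp
    have hmn : m ≤ n := by
      rw [hm]
      exact le_trans (Finset.card_filter_le _ _) (by simp)
    have hCiff : ∀ j, j < n → (f j + (n+1) ≤ i + j ↔ p ≤ j) := by
      intro j hj
      constructor
      · intro hC
        have hsub : Finset.Ico j n ⊆ (Finset.range n).filter fun j => f j + (n+1) ≤ i + j := by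
          intro x hx
          simp only [Finset.mem_Ico] at hx
          simp only [Finset.mem_filter, Finset.mem_range]
          have := hmono j x hx.1
          exact ⟨hx.2, by omega⟩
        have := Finset.card_le_card hsub
        rw [Nat.card_Ico] at this
        omega
      · intro hpj
        by_contra hC
        have hsub : ((Finset.range n).filter fun j => f j + (n+1) ≤ i + j) ⊆ Finset.Ico (j+1) n := by
          intro x hx
          simp only [Finset.mem_filter, Finset.mem_range] at hx
          simp only [Finset.mem_Ico]
          refine ⟨?_, hx.1⟩
          by_contra hxj
          have := hmono x j (by omega)
          omega
        have := Finset.card_le_card hsub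
        rw [Nat.card_Ico] at this
        omega
    have hmi : m ≤ i := by
      rcases Nat.eq_zero_or_pos m with h0 | h1
      · omega
      · have hpn : p < n := by omega
        have := (hCiff p hpn).2 le_rfl
        omega
    set k : ℕ := i - m with hk
    have hipk : i + p = k + n := by omega
    -- regularity: first n entries differ from i+1
    have hne : ∀ j : Fin (n+1), (j : ℕ) < n → ¬ (f (j:ℕ) + (n+1) = i + 1 + (j:ℕ)) := by
      intro j hj hEq
      have hbj : b j = b (Fin.last n) := by
        rw [hbdef j hj, hblast]
        push_cast
        omega
      have := hbinj hbj
      rw [this] at hj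
      simp [Fin.last] at hj
    -- numeric facts
    have hnotC : ∀ j, j < n → j < p → i + 1 + j < f j + (n+1) := by
      intro j hjn hjp
      have h1 : ¬ (f j + (n+1) ≤ i + j) := fun h => by
        have := (hCiff j hjn).1 h; omega
      have h2 := hne ⟨j, by omega⟩ (by simpa using hjn)
      simp only at h2
      omega
    have hjltp : ∀ j, j < p → k ≤ f j := by
      intro j hjp
      have hp1 : 1 ≤ p := by omega
      have hq := hnotC (p-1) (by omega) (by omega)
      have := hmono j (p-1) (by omega)
      omega
    have hfj1 : ∀ j, p ≤ j → j < n → f j + 1 ≤ k := by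
      intro j hpj hjn
      have hCp := (hCiff p (by omega)).2 le_rfl
      have := hmono p j hpj
      omega
    have hfp : f p ≤ k := by
      rcases Nat.lt_or_ge p n with h | h
      · have := hfj1 p le_rfl h; omega
      · have hpn : p = n := by omega
        rw [hpn, hht n le_rfl]; omega
    -- the target values
    set gam : ℕ → ℕ := fun j => if j < p then f j else if j = p then k else f (j-1) + 1 with hgam
    have hstair : ∀ j, j < n + 1 → staircase (n+1) f k j = gam j := by
      intro j hj
      rcases Nat.eq_zero_or_pos k with hk0 | hk1
      · have hpn : p = n := by
          by_contra h
          have := hfj1 p le_rfl (by omega)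
          omega
        rw [hk0]
        show f j = gam j
        simp only [hgam]
        split_ifs with h1 h2
        · rfl
        · rw [h2, hpn, hht n (by omega)]; omega
        · omega
      · rw [stair_closed (n+1) f (by omega) hmono hht k hk1 j]
        simp only [hgam]
        rcases lt_trichotomy j p with hc | hc | hc
        · rcases Nat.eq_zero_or_pos j with h0 | h0
          · subst h0
            have h1 : k ≤ f 0 := hjltp 0 hc
            split_ifs <;> omega
          · have h1 : k ≤ f j := hjltp j hc
            have h2 : k ≤ f (j-1) := hjltp (j-1) (by omega)
            split_ifs <;> omega
        · rcases Nat.eq_zero_or_pos j with h0 | h0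
          · subst h0
            have h1 : f 0 ≤ k := by rw [hc]; exact hfp
            split_ifs <;> omega
          · have h1 : f j ≤ k := by rw [hc]; exact hfp
            have h2 : k ≤ f (j-1) := hjltp (j-1) (by omega)
            split_ifs <;> omega
        · have h1 : f (j-1) + 1 ≤ k := hfj1 (j-1) (by omega) (by omega)
          have h2 : f j ≤ f (j-1) := hmono (j-1) j (by omega)
          split_ifs <;> omega
    have hsum : (∑ t ∈ Finset.range (n+1), gam t) = (∑ t ∈ Finset.range (n+1), f t) + i := by
      have hfn : f n = 0 := hht n (by omega)
      rw [Finset.range_eq_Ico,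
        ← Finset.sum_Ico_consecutive gam (Nat.zero_le p) (show p ≤ n+1 by omega),
        ← Finset.sum_Ico_consecutive f (Nat.zero_le p) (show p ≤ n+1 by omega),
        Finset.sum_Ico_succ_top (show p ≤ n by omega) f,
        Finset.sum_Ico_eq_sum_range gam p (n+1),
        Finset.sum_Ico_eq_sum_range f p n,
        show n + 1 - p = m + 1 by omega,
        show n - p = m by omega,
        Finset.sum_range_succ']
      have e2 : ∑ t ∈ Finset.Ico 0 p, gam t = ∑ t ∈ Finset.Ico 0 p, f t := by
        apply Finset.sum_congr rfl
        intro t ht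
        simp only [Finset.mem_Ico] at ht
        simp only [hgam]
        rw [if_pos ht.2]
      have e5 : ∑ t ∈ Finset.range m, gam (p + (t+1))
          = ∑ t ∈ Finset.range m, (f (p + t) + 1) := by
        apply Finset.sum_congr rfl
        intro t _
        simp only [hgam]
        rw [if_neg (by omega), if_neg (by omega)]
        have : p + (t+1) - 1 = p + t := by omega
        rw [this]
      have e6 : gam (p + 0) = k := by
        simp only [hgam]
        rw [if_neg (by omega), if_pos (by omega)]
      rw [e2, e5, e6, Finset.sum_add_distrib]
      simp only [Finset.sum_const, Finset.card_range, smul_eq_mul, mul_one]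
      omega
    -- dominance: b ∘ w.symm is strictly decreasing
    have hdot : ∀ x, dotAct w (alphaWt (n+1) f i) x = b (w.symm x) - rho (n+1) x := by
      intro x
      simp only [dotAct, hb]
    have hg_anti : ∀ s t : Fin (n+1), s < t → b (w.symm t) < b (w.symm s) := by
      intro s t hst
      have hd := hdom s t (le_of_lt hst)
      rw [hdot s, hdot t] at hd
      have hst' : (s : ℕ) < (t : ℕ) := hst
      simp only [rho] at hd
      omega
    have hlt : ∀ s t : Fin (n+1), b s < b t → w t < w s := by
      intro s t h
      rcases lt_trichotomy (w t) (w s) with h1 | h1 | h1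
      · exact h1
      · exact absurd h (by rw [w.injective h1]; omega)
      · have := hg_anti (w s) (w t) h1
        simp only [Equiv.symm_apply_apply] at this
        omega
    have hlt' : ∀ s t : Fin (n+1), w t < w s → b s < b t := by
      intro s t h
      have := hg_anti (w t) (w s) h
      simpa using this
    have hpr2 : ∀ pr : Fin (n+1) × Fin (n+1), pr.1 < pr.2 → b pr.1 < b pr.2 →
        (pr.2 : ℕ) = n := by
      intro pr h1 h2
      by_contra hn
      have h3 : (pr.2 : ℕ) < n := by have := pr.2.isLt; omega
      exact absurd h2 (not_lt.2 (le_of_lt (hbanti pr.1 pr.2 h1 h3)))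
    have hinv : inversions w = m := by
      show (Finset.univ.filter fun pr : Fin (n+1) × Fin (n+1) =>
          pr.1 < pr.2 ∧ w pr.2 < w pr.1).card = m
      have hset : (Finset.univ.filter fun pr : Fin (n+1) × Fin (n+1) =>
          pr.1 < pr.2 ∧ w pr.2 < w pr.1)
          = Finset.univ.filter fun pr : Fin (n+1) × Fin (n+1) =>
            pr.1 < pr.2 ∧ b pr.1 < b pr.2 := by
        apply Finset.filter_congr
        intro pr _
        exact and_congr_right fun h1 => ⟨hlt' pr.1 pr.2, hlt pr.1 pr.2⟩
      rw [hset, hm]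
      apply Finset.card_nbij' (i := fun pr : Fin (n+1) × Fin (n+1) => (pr.1 : ℕ))
        (j := fun x => ((⟨x % (n+1), Nat.mod_lt _ (by omega)⟩ : Fin (n+1)), Fin.last n))
      · intro pr hpr
        simp only [Finset.mem_coe, Finset.mem_filter, Finset.mem_univ, true_and] at hpr
        obtain ⟨h1, h2⟩ := hpr
        have h3 := hpr2 pr h1 h2
        have h4 : (pr.1 : ℕ) < n := by have : (pr.1 : ℕ) < (pr.2 : ℕ) := h1; omega
        simp only [Finset.mem_coe, Finset.mem_filter, Finset.mem_range]
        refine ⟨h4, ?_⟩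
        have h5 : pr.2 = Fin.last n := Fin.ext h3
        rw [hbdef pr.1 h4, h5, hblast] at h2
        push_cast at h2
        omega
      · intro x hx
        simp only [Finset.mem_coe, Finset.mem_filter, Finset.mem_range] at hx
        have hxx : x % (n+1) = x := Nat.mod_eq_of_lt (by omega)
        simp only [Finset.mem_coe, Finset.mem_filter, Finset.mem_univ, true_and]
        constructor
        · show (⟨x % (n+1), _⟩ : Fin (n+1)) < Fin.last n
          rw [Fin.lt_def]
          simp [Fin.last, hxx]
          omega
        · have hc : ((⟨x % (n+1), Nat.mod_lt _ (by omega)⟩ : Fin (n+1)) : ℕ) < n := by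
            simp [hxx]; omega
          rw [hbdef _ hc, hblast]
          simp only [hxx]
          push_cast
          omega
      · intro pr hpr
        simp only [Finset.mem_coe, Finset.mem_filter, Finset.mem_univ, true_and] at hpr
        obtain ⟨h1, h2⟩ := hpr
        have h3 := hpr2 pr h1 h2
        have h4 : (pr.1 : ℕ) < n := by have : (pr.1 : ℕ) < (pr.2 : ℕ) := h1; omega
        have h5 : pr.2 = Fin.last n := Fin.ext h3
        refine Prod.ext (Fin.ext ?_) ?_
        · simp [Nat.mod_eq_of_lt (show (pr.1 : ℕ) < n+1 from pr.1.isLt)]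
        · exact h5.symm
      · intro x hx
        simp only [Finset.mem_coe, Finset.mem_filter, Finset.mem_range] at hx
        simp [Nat.mod_eq_of_lt (show x < n+1 by omega)]
    have hval : ∀ (jj t : Fin (n+1)) (v : ℤ), b t = v →
        (Finset.univ.filter fun u => v < b u).card = (jj : ℕ) → b (w.symm jj) = v := by
      intro jj t v hbt hcard
      have hset1 : (Finset.univ.filter fun u => v < b u)
          = Finset.univ.filter fun u => w u < w t := by
        apply Finset.filter_congr
        intro u _
        rw [← hbt]
        exact ⟨hlt t u, hlt' t u⟩
      have hset2 : (Finset.univ.filter fun u => w u < w t).card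
          = (Finset.univ.filter fun u : Fin (n+1) => (u : ℕ) < ((w t : Fin (n+1)) : ℕ)).card := by
        apply Finset.card_nbij' (i := fun u => w u) (j := fun u => w.symm u)
        · intro a ha
          simp only [Finset.mem_coe, Finset.mem_filter, Finset.mem_univ, true_and] at ha ⊢
          exact ha
        · intro a ha
          simp only [Finset.mem_coe, Finset.mem_filter, Finset.mem_univ, true_and] at ha ⊢
          rw [Equiv.apply_symm_apply]
          exact Fin.lt_def.2 ha
        · intro a _; simp
        · intro a _; simp
      have hwt : ((w t : Fin (n+1)) : ℕ) = (jj : ℕ) := by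
        rw [hset1, hset2, aux_count_lt _ _ (le_of_lt (w t).isLt)] at hcard
        exact hcard
      have : w t = jj := Fin.ext hwt
      rw [← this, Equiv.symm_apply_apply, hbt]
    have hbw : ∀ j : Fin (n+1), b (w.symm j) = (gam (j:ℕ) : ℤ) + rho (n+1) j := by
      intro j
      rcases lt_trichotomy ((j : ℕ)) p with hc | hc | hc
      · -- case j < p
        have hjn : (j : ℕ) < n := by omega
        have hv : (gam (j:ℕ) : ℤ) + rho (n+1) j = (f (j:ℕ) : ℤ) + (n+1) - (j:ℕ) := by
          simp only [hgam, rho]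
          rw [if_pos hc]
          push_cast; ring
        rw [hv]
        apply hval j j _ (hbdef j hjn)
        have hfilter : (Finset.univ.filter fun u => (f (j:ℕ) : ℤ) + (n+1) - (j:ℕ) < b u)
            = Finset.univ.filter fun u : Fin (n+1) => (u : ℕ) < (j : ℕ) := by
          apply Finset.filter_congr
          intro u _
          rcases Nat.lt_or_ge (u : ℕ) n with hun | hun
          · constructor
            · intro h
              by_contra hle
              push_neg at hle
              rcases Nat.lt_or_ge (j : ℕ) (u : ℕ) with h2 | h2
              · have := hbanti j u (Fin.lt_def.2 h2) hun
                rw [hbdef j hjn] at this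
                omega
              · have : (u : ℕ) = (j : ℕ) := by omega
                have : u = j := Fin.ext this
                subst this
                rw [hbdef u hjn] at h
                omega
            · intro h
              have := hbanti u j (Fin.lt_def.2 h) hjn
              rw [hbdef j hjn] at this
              exact this
          · have hu : (u : ℕ) = n := by have := u.isLt; omega
            have hul : u = Fin.last n := Fin.ext hu
            rw [hul, hblast]
            constructor
            · intro h
              exfalso
              have := hnotC (j:ℕ) hjn hc
              push_cast at h
              omega
            · intro h
              simp [Fin.last] at h
              omega
        rw [hfilter, aux_count_lt _ _ (by omega)]
      · -- case j = p
        have hv : (gam (j:ℕ) : ℤ) + rho (n+1) j = (i : ℤ) + 1 := by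
          simp only [hgam, rho, hc, lt_irrefl, if_false, if_true, ite_true, ite_false]
          push_cast
          omega
        rw [hv]
        apply hval j (Fin.last n) _ hblast
        have hfilter : (Finset.univ.filter fun u => (i : ℤ) + 1 < b u)
            = Finset.univ.filter fun u : Fin (n+1) => (u : ℕ) < p := by
          apply Finset.filter_congr
          intro u _
          rcases Nat.lt_or_ge (u : ℕ) n with hun | hun
          · rw [hbdef u hun]
            constructor
            · intro h
              by_contra hle
              push_neg at hle
              have := (hCiff (u:ℕ) hun).2 hle
              push_cast at h
              omega
            · intro h
              have := hnotC (u:ℕ) hun h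
              push_cast
              omega
          · have hu : (u : ℕ) = n := by have := u.isLt; omega
            have hul : u = Fin.last n := Fin.ext hu
            rw [hul, hblast]
            simp [Fin.last]
            omega
        rw [hfilter, aux_count_lt _ _ (by omega), hc]
      · -- case p < j
        have hj1 : 1 ≤ (j : ℕ) := by omega
        have hjn : (j : ℕ) - 1 < n := by have := j.isLt; omega
        have hCj : f ((j:ℕ)-1) + (n+1) ≤ i + ((j:ℕ)-1) := (hCiff _ hjn).2 (by omega)
        set t : Fin (n+1) := ⟨(j:ℕ) - 1, by omega⟩ with ht
        have hbt : b t = (f ((j:ℕ)-1) : ℤ) + (n+1) - ((j:ℕ)-1 : ℕ) := hbdef t hjn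
        have hv : (gam (j:ℕ) : ℤ) + rho (n+1) j = (f ((j:ℕ)-1) : ℤ) + (n+1) - ((j:ℕ)-1 : ℕ) := by
          simp only [hgam, rho]
          rw [if_neg (by omega), if_neg (by omega)]
          push_cast
          omega
        rw [hv]
        apply hval j t _ hbt
        have hfilter : (Finset.univ.filter fun u =>
              (f ((j:ℕ)-1) : ℤ) + (n+1) - ((j:ℕ)-1 : ℕ) < b u)
            = Finset.univ.filter fun u : Fin (n+1) =>
              (u : ℕ) < (j:ℕ) - 1 ∨ (u : ℕ) = n := by
          apply Finset.filter_congr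
          intro u _
          rcases Nat.lt_or_ge (u : ℕ) n with hun | hun
          · constructor
            · intro h
              by_contra hle
              push_neg at hle
              obtain ⟨hle1, _⟩ := hle
              rcases Nat.lt_or_ge ((j:ℕ)-1) (u : ℕ) with h2 | h2
              · have := hbanti t u (Fin.lt_def.2 (by simpa [ht] using h2)) hun
                rw [hbt] at this
                omega
              · have : (u : ℕ) = (j:ℕ)-1 := by omega
                have hut : u = t := Fin.ext (by simpa [ht] using this)
                subst hut
                rw [hbt] at h
                omega
            · intro h
              rcases h with h | h
              · have := hbanti u t (Fin.lt_def.2 (by simpa [ht] using h)) hjn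
                rw [hbt] at this
                exact this
              · omega
          · have hu : (u : ℕ) = n := by have := u.isLt; omega
            have hul : u = Fin.last n := Fin.ext hu
            rw [hul, hblast]
            simp [Fin.last, hu]
            push_cast
            omega
        rw [hfilter, aux_count_or _ _ (by omega)]
        omega
    have hkinv : i - inversions w = k := by rw [hinv]
    constructor
    · intro j
      have h1 : dotAct w (alphaWt (n+1) f i) j = b (w.symm j) - rho (n+1) j := by
        simp only [dotAct, hb]
      rw [h1, hbw j, hkinv, hstair (j:ℕ) j.isLt]
      ring
    · rw [hkinv]
      have h2 : (∑ t ∈ Finset.range (n+1), staircase (n+1) f k t)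
          = ∑ t ∈ Finset.range (n+1), gam t := by
        apply Finset.sum_congr rfl
        intro t ht
        exact hstair t (Finset.mem_range.1 ht)
      rw [h2]
      omega
  refine ⟨key, fun i i' w w' h1 h2 h3 h4 h5 => ?_⟩
  have e1 := (key i w h1 h2).2
  have e2 := (key i' w' h3 h4).2
  rw [h5] at e1
  omega
end
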